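/- Let q = 2^m, n odd, d_1 | d_2 | ⋯ | d_s | n distinct positive integers, c_0 ∈ F_q, c_i ∈ F_{q^{d_i}} ∩ F_q for 1 ≤ i ≤ s (coefficients taken in the indicated subfields), c = Σ_{j=0}^s c_j, and c̃ ∈ F_q \ {0,1}. Then F(x) = x·(Σ_{i=0}^s c_i·Tr_{d_i m}^{nm}(x) + c·x) + c̃·x is a complete permutation polynomial over F_{q^n}, where d_0 = 1 and Tr_{d m}^{nm} denotes the trace from F_{2^{nm}} to F_{2^{dm}}. -/

import Mathlib

open Finset

namespace Stmt5Aux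

variable {K : Type*} [Field K]

/-- power sum `∑_{k<N} z^{2^{a k}}` -/
def psum (a N : ℕ) (z : K) : K := ∑ k ∈ Finset.range N, z ^ 2 ^ (a * k)

lemma pow_pow_add (z : K) (b c : ℕ) : (z ^ 2 ^ b) ^ 2 ^ c = z ^ 2 ^ (b + c) := by
  rw [← pow_mul, ← pow_add]

lemma psum_zero (a N : ℕ) : psum a N (0 : K) = 0 := by
  simp [psum, zero_pow (Nat.two_pow_pos _).ne']

section Char2
variable (h2 : (2 : K) = 0)
include h2

lemma add_self' (x : K) : x + x = 0 := by
  have : x + x = 2 * x := by ring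
  rw [this, h2, zero_mul]

lemma eq_of_add_eq_zero' {x y : K} (h : x + y = 0) : x = y := by
  linear_combination h - y * h2

lemma add_pow_pow (x y : K) (j : ℕ) : (x + y) ^ 2 ^ j = x ^ 2 ^ j + y ^ 2 ^ j := by
  induction j with
  | zero => simp
  | succ j ih =>
    rw [pow_succ, pow_mul, pow_mul, pow_mul, ih]
    linear_combination (x ^ 2 ^ j * y ^ 2 ^ j) * h2

lemma sum_pow_pow {ι : Type*} (t : Finset ι) (f : ι → K) (j : ℕ) :
    (∑ i ∈ t, f i) ^ 2 ^ j = ∑ i ∈ t, f i ^ 2 ^ j := by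
  classical
  induction t using Finset.induction_on with
  | empty => simp [zero_pow (Nat.two_pow_pos _).ne']
  | insert _ _ h ih => rw [sum_insert h, sum_insert h, add_pow_pow h2, ih]

lemma psum_add (a N : ℕ) (x y : K) : psum a N (x + y) = psum a N x + psum a N y := by
  unfold psum
  rw [← Finset.sum_add_distrib]
  exact Finset.sum_congr rfl fun k _ => add_pow_pow h2 x y _

lemma psum_sum {ι : Type*} (a N : ℕ) (t : Finset ι) (f : ι → K) :
    psum a N (∑ i ∈ t, f i) = ∑ i ∈ t, psum a N (f i) := by
  classical
  induction t using Finset.induction_on with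
  | empty => simp [psum_zero]
  | insert _ _ h ih => rw [sum_insert h, sum_insert h, psum_add h2, ih]

end Char2

lemma fixed_pow_mul {z : K} {a : ℕ} (hz : z ^ 2 ^ a = z) (k : ℕ) : z ^ 2 ^ (a * k) = z := by
  induction k with
  | zero => simp
  | succ k ih =>
    have : a * (k + 1) = a * k + a := by ring
    rw [this, ← pow_pow_add, ih, hz]

lemma fixed_of_dvd {z : K} {a b : ℕ} (hz : z ^ 2 ^ a = z) (hab : a ∣ b) : z ^ 2 ^ b = z := by
  obtain ⟨k, rfl⟩ := hab
  exact fixed_pow_mul hz k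

lemma psum_const_mul {c : K} {a : ℕ} (hc : c ^ 2 ^ a = c) (N : ℕ) (z : K) :
    psum a N (c * z) = c * psum a N z := by
  unfold psum
  rw [Finset.mul_sum]
  refine Finset.sum_congr rfl fun k _ => ?_
  rw [mul_pow, fixed_pow_mul hc]

lemma psum_fixed {z : K} {a : ℕ} (hz : z ^ 2 ^ a = z) (N : ℕ) : psum a N z = (N : K) * z := by
  unfold psum
  rw [Finset.sum_congr rfl fun k _ => fixed_pow_mul hz k, Finset.sum_const, card_range,
    nsmul_eq_mul]

lemma cast_odd_eq_one (h2 : (2 : K) = 0) {N : ℕ} (hN : Odd N) : ((N : K)) = 1 := by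
  obtain ⟨k, rfl⟩ := hN
  push_cast
  rw [h2]
  ring

lemma psum_fixed_odd (h2 : (2 : K) = 0) {z : K} {a N : ℕ} (hz : z ^ 2 ^ a = z) (hN : Odd N) :
    psum a N z = z := by
  rw [psum_fixed hz, cast_odd_eq_one h2 hN, one_mul]

lemma psum_sq (h2 : (2 : K) = 0) (a N : ℕ) (z : K) :
    psum a N (z ^ 2) = (psum a N z) ^ 2 := by
  unfold psum
  have : (∑ k ∈ Finset.range N, z ^ 2 ^ (a * k)) ^ 2
      = (∑ k ∈ Finset.range N, z ^ 2 ^ (a * k)) ^ 2 ^ 1 := by norm_num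
  rw [this, sum_pow_pow h2]
  refine Finset.sum_congr rfl fun k _ => ?_
  rw [pow_pow_add]
  have : (z ^ 2) ^ 2 ^ (a * k) = (z ^ 2 ^ 1) ^ 2 ^ (a * k) := by norm_num
  rw [this, pow_pow_add, add_comm]

lemma psum_psum (h2 : (2 : K) = 0) (a r N : ℕ) (z : K) :
    psum a r (psum (a * r) N z) = psum a (r * N) z := by
  induction N with
  | zero => simp [psum_zero, psum]
  | succ N ih =>
    have h1 : psum (a * r) (N + 1) z = psum (a * r) N z + z ^ 2 ^ (a * r * N) := by
      unfold psum; rw [Finset.sum_range_succ]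
    rw [h1, psum_add h2, ih]
    have h3 : r * (N + 1) = r * N + r := by ring
    rw [h3]
    have h4 : psum a (r * N + r) z = psum a (r * N) z + ∑ k ∈ Finset.range r, z ^ 2 ^ (a * (r * N + k)) := by
      unfold psum
      rw [Finset.sum_range_add]
    rw [h4]
    congr 1
    unfold psum
    refine Finset.sum_congr rfl fun k _ => ?_
    rw [pow_pow_add, show a * r * N + a * k = a * (r * N + k) by ring]

lemma odd_of_dvd {a n : ℕ} (hn : Odd n) (h : a ∣ n) : Odd a := by
  rcases Nat.even_or_odd a with he | ho
  · exfalso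
    have h2n : (2 : ℕ) ∣ n := dvd_trans (even_iff_two_dvd.mp he) h
    exact (Nat.not_odd_iff_even.mpr (even_iff_two_dvd.mpr h2n)) hn
  · exact ho

lemma psum_shift (h2 : (2 : K) = 0) {a N : ℕ} {x : K} (hx : x ^ 2 ^ (a * N) = x) :
    (psum a N x) ^ 2 ^ a = psum a N x := by
  cases N with
  | zero => simp [psum, zero_pow (Nat.two_pow_pos _).ne']
  | succ M =>
    unfold psum
    rw [sum_pow_pow h2]
    have hterm : ∀ k, (x ^ 2 ^ (a * k)) ^ 2 ^ a = x ^ 2 ^ (a * (k + 1)) := fun k => by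
      rw [pow_pow_add, show a * k + a = a * (k + 1) by ring]
    rw [Finset.sum_congr rfl fun k _ => hterm k, Finset.sum_range_succ,
      Finset.sum_range_succ']
    rw [hx]
    simp only [Nat.mul_zero, pow_zero, pow_one]
    try exact add_comm _ _

lemma trace_mem (h2 : (2 : K) = 0) {n m e : ℕ} (hq : ∀ x : K, x ^ 2 ^ (n * m) = x)
    (hen : e ∣ n) (x : K) :
    (psum (e * m) (n / e) x) ^ 2 ^ (e * m) = psum (e * m) (n / e) x := by
  apply psum_shift h2
  have h : e * m * (n / e) = n * m := by
    rw [show e * m * (n / e) = e * (n / e) * m by ring, Nat.mul_div_cancel' hen]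
  rw [h]
  exact hq x

lemma trace_trans (h2 : (2 : K) = 0) {n m e e' : ℕ} (he : 0 < e) (hee' : e ∣ e')
    (he'n : e' ∣ n) (x : K) :
    psum (e * m) (e' / e) (psum (e' * m) (n / e') x) = psum (e * m) (n / e) x := by
  have h1 : e * m * (e' / e) = e' * m := by
    rw [show e * m * (e' / e) = e * (e' / e) * m by ring, Nat.mul_div_cancel' hee']
  have h2' : (e' / e) * (n / e') = n / e := by
    set q := e' / e * (n / e') with hqdef
    have key : e * q = n := by
      rw [hqdef, ← mul_assoc, Nat.mul_div_cancel' hee', Nat.mul_div_cancel' he'n]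
    rw [← key, Nat.mul_div_cancel_left _ he]
  calc psum (e * m) (e' / e) (psum (e' * m) (n / e') x)
      = psum (e * m) (e' / e) (psum ((e * m) * (e' / e)) (n / e') x) := by rw [h1]
    _ = psum (e * m) ((e' / e) * (n / e')) x := psum_psum h2 _ _ _ x
    _ = psum (e * m) (n / e) x := by rw [h2']

lemma trace_base (h2 : (2 : K) = 0) {n m e e'' : ℕ} (hn : Odd n)
    (hq : ∀ x : K, x ^ 2 ^ (n * m) = x) (he : 0 < e) (hee : e ∣ e'') (he''n : e'' ∣ n)
    (x : K) :
    psum m e'' (psum (e * m) (n / e) x) = psum m n x := by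
  have hen : e ∣ n := hee.trans he''n
  have hzf : (psum (e * m) (n / e) x) ^ 2 ^ (e * m) = psum (e * m) (n / e) x :=
    trace_mem h2 hq hen x
  have hodd : Odd (e'' / e) := odd_of_dvd hn ((Nat.div_dvd_of_dvd hee).trans he''n)
  have step1 : psum m e'' (psum (e * m) (n / e) x)
      = psum m e (psum (m * e) (e'' / e) (psum (e * m) (n / e) x)) := by
    rw [psum_psum h2 m e (e'' / e), Nat.mul_div_cancel' hee]
  have inner : psum (m * e) (e'' / e) (psum (e * m) (n / e) x) = psum (e * m) (n / e) x := by
    rw [show m * e = e * m by ring]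
    exact psum_fixed_odd h2 hzf hodd
  rw [step1, inner, show e * m = m * e by ring, psum_psum h2 m e (n / e) x,
    Nat.mul_div_cancel' hen]

/-- extended divisor chain -/
def Dfun (s n : ℕ) (d : Fin (s + 1) → ℕ) (j : ℕ) : ℕ :=
  if h : j < s + 1 then d ⟨j, h⟩ else n

lemma Dfun_coe {s n : ℕ} {d : Fin (s + 1) → ℕ} (i : Fin (s + 1)) :
    Dfun s n d (i : ℕ) = d i := by
  simp [Dfun, i.isLt]

lemma Dfun_last {s n : ℕ} {d : Fin (s + 1) → ℕ} : Dfun s n d (s + 1) = n := by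
  simp [Dfun]

theorem main_inj {K : Type*} [Field K] (m n s : ℕ)
    (hn : Odd n) (h2 : (2 : K) = 0) (hq : ∀ x : K, x ^ 2 ^ (n * m) = x)
    (d : Fin (s + 1) → ℕ) (hdpos : ∀ i, 0 < d i)
    (hchain : ∀ i : Fin s, d i.castSucc ∣ d i.succ)
    (hdn : d (Fin.last s) ∣ n)
    (c : Fin (s + 1) → K) (hc : ∀ i, c i ^ 2 ^ m = c i)
    (ct : K) (hctF : ct ^ 2 ^ m = ct) (hct0 : ct ≠ 0) :
    Function.Injective (fun x : K =>
      ∑ i, c i * (x * psum (d i * m) (n / d i) x) + (∑ i, c i) * x ^ 2 + ct * x) := by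
  classical
  have hn0 : 0 < n := hn.pos
  set Dn : ℕ → ℕ := Dfun s n d with hDndef
  have hDn_coe : ∀ i : Fin (s + 1), Dn (i : ℕ) = d i := fun i => Dfun_coe i
  have hDn_pos : ∀ j, 0 < Dn j := by
    intro j
    by_cases h : j < s + 1
    · rw [hDndef]; unfold Dfun; rw [dif_pos h]; exact hdpos _
    · rw [hDndef]; unfold Dfun; rw [dif_neg h]; exact hn0
  have hstep : ∀ j, Dn j ∣ Dn (j + 1) := by
    intro j
    rcases lt_trichotomy j s with hj | rfl | hj
    · have h1 : j < s + 1 := by omega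
      have h1' : j + 1 < s + 1 := by omega
      rw [hDndef]; unfold Dfun; rw [dif_pos h1, dif_pos h1']
      have := hchain ⟨j, hj⟩
      simpa [Fin.castSucc, Fin.castAdd, Fin.castLE, Fin.succ] using this
    · rw [hDndef]; unfold Dfun
      rw [dif_pos (by omega : j < j + 1), dif_neg (by omega : ¬ j + 1 < j + 1)]
      simpa [Fin.last] using hdn
    · rw [hDndef]; unfold Dfun
      rw [dif_neg (by omega : ¬ j < s + 1), dif_neg (by omega : ¬ j + 1 < s + 1)]
  have hmono : ∀ a b : ℕ, a ≤ b → Dn a ∣ Dn b := by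
    intro a b hab
    induction b with
    | zero =>
      have : a = 0 := by omega
      subst this; exact dvd_refl _
    | succ b ih =>
      rcases Nat.lt_or_ge a (b + 1) with h | h
      · exact (ih (by omega)).trans (hstep b)
      · have : a = b + 1 := by omega
        subst this; exact dvd_refl _
  have hDn_last : Dn (s + 1) = n := by rw [hDndef]; exact Dfun_last
  have hDn_dvd_n : ∀ j : ℕ, Dn j ∣ n := by
    intro j
    rcases Nat.lt_or_ge j (s + 2) with h | h
    · have := hmono j (s + 1) (by omega)
      rwa [hDn_last] at this
    · rw [hDndef]; unfold Dfun; rw [dif_neg (by omega : ¬ j < s + 1)]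
  have hdi_dvd : ∀ i : Fin (s + 1), d i ∣ n := by
    intro i; rw [← hDn_coe i]; exact hDn_dvd_n _
  have hR : ∀ j, ∀ z : K,
      psum (Dn j * m) (n / Dn j)
          (∑ i, c i * (z * psum (d i * m) (n / d i) z) + (∑ i, c i) * z ^ 2 + ct * z)
        = (∑ i ∈ Finset.univ.filter (fun i : Fin (s + 1) => (i : ℕ) < j),
              c i * psum (d i * m) (n / d i) z) * psum (Dn j * m) (n / Dn j) z
          + (∑ i ∈ Finset.univ.filter (fun i : Fin (s + 1) => (i : ℕ) < j), c i)
              * (psum (Dn j * m) (n / Dn j) z) ^ 2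
          + ct * psum (Dn j * m) (n / Dn j) z := by
    intro j z
    have hcfix : ∀ i : Fin (s + 1), (c i) ^ 2 ^ (Dn j * m) = c i :=
      fun i => fixed_of_dvd (hc i) (dvd_mul_left m (Dn j))
    have hctfix : ct ^ 2 ^ (Dn j * m) = ct := fixed_of_dvd hctF (dvd_mul_left m (Dn j))
    have hterm : ∀ i : Fin (s + 1),
        psum (Dn j * m) (n / Dn j) (c i * (z * psum (d i * m) (n / d i) z))
          = if (i : ℕ) < j then
              c i * (psum (d i * m) (n / d i) z * psum (Dn j * m) (n / Dn j) z)
            else c i * (psum (Dn j * m) (n / Dn j) z) ^ 2 := by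
      intro i
      rw [psum_const_mul (hcfix i)]
      by_cases hij : (i : ℕ) < j
      · rw [if_pos hij]
        congr 1
        have hdij : d i ∣ Dn j := by
          rw [← hDn_coe i]; exact hmono _ _ (le_of_lt hij)
        have hSfix : (psum (d i * m) (n / d i) z) ^ 2 ^ (Dn j * m)
            = psum (d i * m) (n / d i) z :=
          fixed_of_dvd (trace_mem h2 hq (hdi_dvd i) z) (mul_dvd_mul_right hdij m)
        rw [mul_comm z (psum (d i * m) (n / d i) z), psum_const_mul hSfix]
      · rw [if_neg hij]
        congr 1
        have hji : j ≤ (i : ℕ) := by omega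
        have hdvd1 : Dn j ∣ d i := by rw [← hDn_coe i]; exact hmono _ _ hji
        have htt : ∀ w : K, psum (Dn j * m) (d i / Dn j) (psum (d i * m) (n / d i) w)
            = psum (Dn j * m) (n / Dn j) w :=
          fun w => trace_trans h2 (hDn_pos j) hdvd1 (hdi_dvd i) w
        calc psum (Dn j * m) (n / Dn j) (z * psum (d i * m) (n / d i) z)
            = psum (Dn j * m) (d i / Dn j)
                (psum (d i * m) (n / d i) (z * psum (d i * m) (n / d i) z)) := (htt _).symm
          _ = psum (Dn j * m) (d i / Dn j) ((psum (d i * m) (n / d i) z) ^ 2) := by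
              rw [mul_comm z (psum (d i * m) (n / d i) z),
                psum_const_mul (trace_mem h2 hq (hdi_dvd i) z), ← sq]
          _ = (psum (Dn j * m) (d i / Dn j) (psum (d i * m) (n / d i) z)) ^ 2 :=
              psum_sq h2 _ _ _
          _ = (psum (Dn j * m) (n / Dn j) z) ^ 2 := by rw [htt]
    have hcsumfix : (∑ i, c i) ^ 2 ^ (Dn j * m) = ∑ i, c i := by
      rw [sum_pow_pow h2]
      exact Finset.sum_congr rfl fun i _ => hcfix i
    rw [psum_add h2, psum_add h2, psum_sum h2]
    rw [Finset.sum_congr rfl fun i _ => hterm i, Finset.sum_ite]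
    rw [psum_const_mul hcsumfix, psum_sq h2, psum_const_mul hctfix]
    have e1 : ∑ i ∈ Finset.univ.filter (fun i : Fin (s + 1) => (i : ℕ) < j),
          c i * (psum (d i * m) (n / d i) z * psum (Dn j * m) (n / Dn j) z)
        = (∑ i ∈ Finset.univ.filter (fun i : Fin (s + 1) => (i : ℕ) < j),
            c i * psum (d i * m) (n / d i) z) * psum (Dn j * m) (n / Dn j) z := by
      rw [Finset.sum_mul]
      exact Finset.sum_congr rfl fun i _ => by ring
    have e2 : ∑ i ∈ Finset.univ.filter (fun i : Fin (s + 1) => ¬ (i : ℕ) < j),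
          c i * (psum (Dn j * m) (n / Dn j) z) ^ 2
        = (∑ i ∈ Finset.univ.filter (fun i : Fin (s + 1) => ¬ (i : ℕ) < j), c i)
            * (psum (Dn j * m) (n / Dn j) z) ^ 2 := (Finset.sum_mul _ _ _).symm
    rw [e1, e2]
    have hsplit : (∑ i, c i)
        = (∑ i ∈ Finset.univ.filter (fun i : Fin (s + 1) => (i : ℕ) < j), c i)
          + ∑ i ∈ Finset.univ.filter (fun i : Fin (s + 1) => ¬ (i : ℕ) < j), c i :=
      (Finset.sum_filter_add_sum_filter_not _ _ _).symm
    linear_combination (psum (Dn j * m) (n / Dn j) z) ^ 2 * hsplit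
      + (∑ i ∈ Finset.univ.filter (fun i : Fin (s + 1) => ¬ (i : ℕ) < j), c i)
        * (psum (Dn j * m) (n / Dn j) z) ^ 2 * h2
  intro x x' hxy
  simp only at hxy
  have key : ∀ j, j ≤ s + 1 →
      psum (Dn j * m) (n / Dn j) x = psum (Dn j * m) (n / Dn j) x' := by
    intro j
    induction j using Nat.strong_induction_on with
    | _ j IH =>
      intro hj
      cases j with
      | zero =>
        have hRx := hR 0 x
        have hRx' := hR 0 x'
        rw [hxy] at hRx
        have hemp : Finset.univ.filter (fun i : Fin (s + 1) => (i : ℕ) < 0) = ∅ := by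
          simp
        rw [hemp] at hRx hRx'
        simp only [Finset.sum_empty, zero_mul, zero_add] at hRx hRx'
        exact mul_left_cancel₀ hct0 (hRx.symm.trans hRx')
      | succ p =>
        have hRx := hR (p + 1) x
        have hRx' := hR (p + 1) x'
        rw [hxy] at hRx
        have hAeq : (∑ i ∈ Finset.univ.filter (fun i : Fin (s + 1) => (i : ℕ) < p + 1),
              c i * psum (d i * m) (n / d i) x')
            = ∑ i ∈ Finset.univ.filter (fun i : Fin (s + 1) => (i : ℕ) < p + 1),
              c i * psum (d i * m) (n / d i) x := by
          refine Finset.sum_congr rfl fun i hi => ?_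
          have hi' : (i : ℕ) < p + 1 := by simpa using hi
          have hIHi := IH (i : ℕ) hi' (by omega)
          rw [hDn_coe i] at hIHi
          rw [hIHi]
        rw [hAeq] at hRx'
        set A := ∑ i ∈ Finset.univ.filter (fun i : Fin (s + 1) => (i : ℕ) < p + 1),
          c i * psum (d i * m) (n / d i) x with hA
        set Cl := ∑ i ∈ Finset.univ.filter (fun i : Fin (s + 1) => (i : ℕ) < p + 1),
          c i with hCl
        set Tx := psum (Dn (p + 1) * m) (n / Dn (p + 1)) x with hTx
        set Tx' := psum (Dn (p + 1) * m) (n / Dn (p + 1)) x' with hTx'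
        have heq : A * Tx + Cl * Tx ^ 2 + ct * Tx = A * Tx' + Cl * Tx' ^ 2 + ct * Tx' :=
          hRx.symm.trans hRx'
        have hfac : (Tx + Tx') * (A + Cl * (Tx + Tx') + ct) = 0 := by
          linear_combination heq + (A * Tx' + Cl * Tx' ^ 2 + ct * Tx' + Cl * Tx * Tx') * h2
        rcases mul_eq_zero.mp hfac with hw | hz
        · exact eq_of_add_eq_zero' h2 hw
        · have hdvd_p : Dn p ∣ Dn (p + 1) := hstep p
          have hpn : Dn p ∣ n := hDn_dvd_n p
          have hp1n : Dn (p + 1) ∣ n := hDn_dvd_n (p + 1)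
          have hApfix : A ^ 2 ^ (Dn p * m) = A := by
            rw [hA, sum_pow_pow h2]
            refine Finset.sum_congr rfl fun i hi => ?_
            have hi' : (i : ℕ) < p + 1 := by simpa using hi
            have h1 : (c i) ^ 2 ^ (Dn p * m) = c i :=
              fixed_of_dvd (hc i) (dvd_mul_left m (Dn p))
            have hdip : d i ∣ Dn p := by
              rw [← hDn_coe i]; exact hmono _ _ (by omega)
            have h2s : (psum (d i * m) (n / d i) x) ^ 2 ^ (Dn p * m)
                = psum (d i * m) (n / d i) x :=
              fixed_of_dvd (trace_mem h2 hq (hdi_dvd i) x) (mul_dvd_mul_right hdip m)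
            rw [mul_pow, h1, h2s]
          have hClfix : Cl ^ 2 ^ (Dn p * m) = Cl := by
            rw [hCl, sum_pow_pow h2]
            exact Finset.sum_congr rfl fun i _ =>
              fixed_of_dvd (hc i) (dvd_mul_left m (Dn p))
          have hctfix : ct ^ 2 ^ (Dn p * m) = ct := fixed_of_dvd hctF (dvd_mul_left m (Dn p))
          have hoddr : Odd (Dn (p + 1) / Dn p) :=
            odd_of_dvd hn ((Nat.div_dvd_of_dvd hdvd_p).trans hp1n)
          have hPhiTx : psum (Dn p * m) (Dn (p + 1) / Dn p) Tx
              = psum (Dn p * m) (n / Dn p) x := by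
            rw [hTx]; exact trace_trans h2 (hDn_pos p) hdvd_p hp1n x
          have hPhiTx' : psum (Dn p * m) (Dn (p + 1) / Dn p) Tx'
              = psum (Dn p * m) (n / Dn p) x' := by
            rw [hTx']; exact trace_trans h2 (hDn_pos p) hdvd_p hp1n x'
          have hIHp : psum (Dn p * m) (n / Dn p) x = psum (Dn p * m) (n / Dn p) x' :=
            IH p (by omega) (by omega)
          have h0 : psum (Dn p * m) (Dn (p + 1) / Dn p) (A + Cl * (Tx + Tx') + ct) = 0 := by
            rw [hz, psum_zero]
          rw [psum_add h2, psum_add h2, psum_fixed_odd h2 hApfix hoddr,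
            psum_fixed_odd h2 hctfix hoddr, psum_const_mul hClfix, psum_add h2,
            hPhiTx, hPhiTx', hIHp] at h0
          rw [add_self' h2 (psum (Dn p * m) (n / Dn p) x')] at h0
          have h0' : A + ct = 0 := by
            rw [mul_zero, add_zero] at h0
            exact h0
          have hClw : Cl * (Tx + Tx') = 0 := by linear_combination hz - h0'
          have h1 : psum m (Dn p) (A + ct) = 0 := by rw [h0', psum_zero]
          rw [psum_add h2] at h1
          have hPsiA : psum m (Dn p) A = Cl * psum m n x := by
            rw [hA, psum_sum h2, hCl, Finset.sum_mul]
            refine Finset.sum_congr rfl fun i hi => ?_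
            have hi' : (i : ℕ) < p + 1 := by simpa using hi
            rw [psum_const_mul (hc i)]
            congr 1
            have hdip : d i ∣ Dn p := by
              rw [← hDn_coe i]; exact hmono _ _ (by omega)
            exact trace_base h2 hn hq (hdpos i) hdip hpn x
          have hoddp : Odd (Dn p) := odd_of_dvd hn hpn
          have hPsict : psum m (Dn p) ct = ct := psum_fixed_odd h2 hctF hoddp
          rw [hPsiA, hPsict] at h1
          have hClne : Cl ≠ 0 := by
            intro h
            rw [h, zero_mul, zero_add] at h1
            exact hct0 h1
          have hw0 : Tx + Tx' = 0 := by
            rcases mul_eq_zero.mp hClw with h | h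
            · exact absurd h hClne
            · exact h
          exact eq_of_add_eq_zero' h2 hw0
  have hTop : ∀ z : K, psum (Dn (s + 1) * m) (n / Dn (s + 1)) z = z := by
    intro z
    rw [hDn_last, Nat.div_self hn0]
    simp [psum]
  have := key (s + 1) le_rfl
  rwa [hTop x, hTop x'] at this

end Stmt5Aux

def IsCPP {K : Type*} [Field K] (f : K → K) : Prop :=
  Function.Bijective f ∧ Function.Bijective fun x => f x + x

/-- Multi-trace construction: `K = F_{2^{nm}}`, relative traces realized as the
power-sum polynomials `x ↦ ∑_{k < n/d} x^{2^{d·m·k}}`, and membership of a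
coefficient in the subfield `F_{2^e}` expressed by `c ^ 2^e = c`. -/
theorem stmt5 {K : Type*} [Field K] [Fintype K] (m n s : ℕ) (hm : 0 < m)
    (hn : Odd n) (hK : Fintype.card K = 2 ^ (n * m))
    (d : Fin (s + 1) → ℕ) (hd0 : d 0 = 1) (hdpos : ∀ i, 0 < d i)
    (hdinj : Function.Injective d)
    (hchain : ∀ i : Fin s, d i.castSucc ∣ d i.succ)
    (hdn : d (Fin.last s) ∣ n)
    (c : Fin (s + 1) → K) (hc : ∀ i, c i ^ 2 ^ m = c i)
    (ct : K) (hctF : ct ^ 2 ^ m = ct) (hct0 : ct ≠ 0) (hct1 : ct ≠ 1) :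
    IsCPP fun x : K =>
      x * ((∑ i, c i * ∑ k ∈ Finset.range (n / d i), x ^ 2 ^ (d i * m * k)) +
          (∑ i, c i) * x) +
        ct * x := by
  classical
  have hnm : n * m ≠ 0 := by
    have := hn.pos
    positivity
  have h2 : (2 : K) = 0 := by
    have h1 : ((Fintype.card K : ℕ) : K) = 0 := FiniteField.cast_card_eq_zero K
    rw [hK] at h1
    push_cast at h1
    exact (pow_eq_zero_iff hnm).mp h1
  have hq : ∀ x : K, x ^ 2 ^ (n * m) = x := by
    intro x
    have := FiniteField.pow_card x
    rwa [hK] at this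
  have hctF' : (ct + 1) ^ 2 ^ m = ct + 1 := by
    rw [Stmt5Aux.add_pow_pow h2 ct 1 m, one_pow, hctF]
  have hct0' : ct + 1 ≠ 0 := by
    intro h
    exact hct1 (Stmt5Aux.eq_of_add_eq_zero' h2 h)
  have inj1 := Stmt5Aux.main_inj m n s hn h2 hq d hdpos hchain hdn c hc ct hctF hct0
  have inj2 := Stmt5Aux.main_inj m n s hn h2 hq d hdpos hchain hdn c hc (ct + 1) hctF' hct0'
  constructor
  · have hfun : (fun x : K =>
        x * ((∑ i, c i * ∑ k ∈ Finset.range (n / d i), x ^ 2 ^ (d i * m * k)) +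
            (∑ i, c i) * x) + ct * x)
        = fun x : K => ∑ i, c i * (x * Stmt5Aux.psum (d i * m) (n / d i) x)
            + (∑ i, c i) * x ^ 2 + ct * x := by
      funext x
      show x * ((∑ i, c i * Stmt5Aux.psum (d i * m) (n / d i) x) + (∑ i, c i) * x) + ct * x
        = ∑ i, c i * (x * Stmt5Aux.psum (d i * m) (n / d i) x) + (∑ i, c i) * x ^ 2 + ct * x
      rw [mul_add, Finset.mul_sum,
        Finset.sum_congr rfl fun i _ => mul_left_comm x (c i) (Stmt5Aux.psum (d i * m) (n / d i) x)]
      ring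
    rw [hfun]
    exact Finite.injective_iff_bijective.mp inj1
  · have hfun : (fun x : K =>
        (x * ((∑ i, c i * ∑ k ∈ Finset.range (n / d i), x ^ 2 ^ (d i * m * k)) +
            (∑ i, c i) * x) + ct * x) + x)
        = fun x : K => ∑ i, c i * (x * Stmt5Aux.psum (d i * m) (n / d i) x)
            + (∑ i, c i) * x ^ 2 + (ct + 1) * x := by
      funext x
      show (x * ((∑ i, c i * Stmt5Aux.psum (d i * m) (n / d i) x) + (∑ i, c i) * x) + ct * x) + x
        = ∑ i, c i * (x * Stmt5Aux.psum (d i * m) (n / d i) x) + (∑ i, c i) * x ^ 2 + (ct + 1) * x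
      rw [mul_add, Finset.mul_sum,
        Finset.sum_congr rfl fun i _ => mul_left_comm x (c i) (Stmt5Aux.psum (d i * m) (n / d i) x)]
      ring
    show Function.Bijective fun x : K =>
      (x * ((∑ i, c i * ∑ k ∈ Finset.range (n / d i), x ^ 2 ^ (d i * m * k)) +
          (∑ i, c i) * x) + ct * x) + x
    rw [hfun]
    exact Finite.injective_iff_bijective.mp inj2
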